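/- Under the constrained random coding ensemble with joint typicality decoding, the probability of error satisfies P(E) ≤ P(E_1 | M=1) + P(A) + 2^{n(R − I(X;Y) + γ + δ(ε))}, where δ(ε) → 0 as ε → 0; consequently, if R < I(X;Y) − γ and both P(E_1|M=1) → 0 and P(A) → 0, then P(E) → 0 as n → ∞. -/

import Mathlib

open scoped Classical

/-- Probability of an event under a pmf `μ` on a finite sample space. -/
noncomputable def Pr {Ω : Type*} [Fintype Ω] (μ : Ω → ℝ) (E : Ω → Prop) : ℝ :=
  ∑ ω, if E ω then μ ω else 0

/-- Sample space of the constrained random-coding ensemble `(S, 𝒞, Yⁿ, M)`: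
a constraint value, a codebook of `K` codewords, a channel output word, and a
message. -/
abbrev EnsSpace (SS X Y : Type*) (n K : ℕ) : Type _ :=
  SS × (Fin K → Fin n → X) × (Fin n → Y) × Fin K

/-- Joint pmf of the ensemble: `M` uniform on the `K` messages, `S ∼ p_S`,
codewords conditionally i.i.d. `∼ q_s` given `S = s`, and `Yⁿ ∼ wⁿ(·|Xⁿ(M))`. -/
noncomputable def μens {SS X Y : Type*} (n K : ℕ) (pS : SS → ℝ)
    (qs : SS → (Fin n → X) → ℝ) (w : X → Y → ℝ) :
    EnsSpace SS X Y n K → ℝ :=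
  fun ω => ((K : ℝ))⁻¹ * pS ω.1 * (∏ j, qs ω.1 (ω.2.1 j)) *
    ∏ i, w (ω.2.1 ω.2.2.2 i) (ω.2.2.1 i)

/-- Information density
`i(s;yⁿ) = log₂( p_{S,Yⁿ}(s,yⁿ) / (p_S(s) tⁿ(yⁿ)) )` with
`p_{S,Yⁿ}(s,yⁿ) = p_S(s) ∑_{xⁿ} q_s(xⁿ) wⁿ(yⁿ|xⁿ)` and `t(y) = ∑_x q(x)w(y|x)`. -/
noncomputable def infoD {SS X Y : Type*} [Fintype X] [Fintype Y] (n : ℕ)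
    (q : X → ℝ) (w : X → Y → ℝ) (pS : SS → ℝ) (qs : SS → (Fin n → X) → ℝ)
    (s : SS) (y : Fin n → Y) : ℝ :=
  Real.logb 2 ((pS s * ∑ x : Fin n → X, qs s x * ∏ i, w (x i) (y i)) /
    (pS s * ∏ i, ∑ a, q a * w a (y i)))

/-- `I(X;Y)` in bits for `(X,Y) ∼ q(x)w(y|x)`. -/
noncomputable def Ixy {X Y : Type*} [Fintype X] [Fintype Y] (q : X → ℝ)
    (w : X → Y → ℝ) : ℝ :=
  ∑ a, ∑ b, q a * w a b *
    Real.logb 2 (q a * w a b / (q a * ∑ a', q a' * w a' b))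

/-- Probability of error `P(E)`, `E = {M̂ ≠ M}`, under the joint typicality
decoder with typical set `T`: an error occurs unless the transmitted codeword
is jointly typical with `Yⁿ` and no other codeword is. -/
noncomputable def PE {SS X Y : Type*} [Fintype SS] [Fintype X] [Fintype Y]
    (n K : ℕ) (pS : SS → ℝ) (qs : SS → (Fin n → X) → ℝ) (w : X → Y → ℝ)
    (T : Finset ((Fin n → X) × (Fin n → Y))) : ℝ :=
  Pr (μens n K pS qs w) fun ω =>
    ¬((ω.2.1 ω.2.2.2, ω.2.2.1) ∈ T ∧
      ∀ j, j ≠ ω.2.2.2 → (ω.2.1 j, ω.2.2.1) ∉ T)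

/-- `P(E₁ | M = m₀)` where `E₁ = {(Xⁿ(M), Yⁿ) ∉ T}`. -/
noncomputable def PE1cond {SS X Y : Type*} [Fintype SS] [Fintype X] [Fintype Y]
    (n K : ℕ) (pS : SS → ℝ) (qs : SS → (Fin n → X) → ℝ) (w : X → Y → ℝ)
    (T : Finset ((Fin n → X) × (Fin n → Y))) (m₀ : Fin K) : ℝ :=
  Pr (μens n K pS qs w)
      (fun ω => (ω.2.1 ω.2.2.2, ω.2.2.1) ∉ T ∧ ω.2.2.2 = m₀) /
    Pr (μens n K pS qs w) (fun ω => ω.2.2.2 = m₀)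

/-- `P(A)` where `A = {i(S;Yⁿ) > nγ}`. -/
noncomputable def PA {SS X Y : Type*} [Fintype SS] [Fintype X] [Fintype Y]
    (n K : ℕ) (q : X → ℝ) (pS : SS → ℝ) (qs : SS → (Fin n → X) → ℝ)
    (w : X → Y → ℝ) (γ : ℝ) : ℝ :=
  Pr (μens n K pS qs w) fun ω =>
    (n : ℝ) * γ < infoD n q w pS qs ω.1 ω.2.2.1


/- ------------------  helper lemmas ------------------ -/

lemma sum_pi_prod {K : ℕ} {A : Type*} [Fintype A] (φ : Fin K → A → ℝ) :
    ∑ C : Fin K → A, ∏ j, φ j (C j) = ∏ j, ∑ a, φ j a := by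
  rw [Finset.prod_univ_sum]
  simp [Fintype.piFinset_univ]

lemma marg_one {A : Type*} [Fintype A] {K : ℕ} (g f : A → ℝ) (hg : ∑ a, g a = 1)
    (m : Fin K) :
    ∑ C : Fin K → A, (∏ j, g (C j)) * f (C m) = ∑ a, g a * f a := by
  have h := sum_pi_prod (fun l a => g a * if l = m then f a else 1)
  have hL : ∀ C : Fin K → A,
      (∏ l, (g (C l) * if l = m then f (C l) else 1)) = (∏ j, g (C j)) * f (C m) := by
    intro C
    rw [Finset.prod_mul_distrib]
    congr 1
    rw [Finset.prod_ite_eq' Finset.univ m (fun l => f (C l))]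
    simp
  have hR : (∏ l : Fin K, ∑ a, (g a * if l = m then f a else 1)) = ∑ a, g a * f a := by
    rw [Finset.prod_eq_single m]
    · simp
    · intro b _ hb
      simp [hb, hg]
    · simp
  calc ∑ C : Fin K → A, (∏ j, g (C j)) * f (C m)
      = ∑ C : Fin K → A, ∏ l, (g (C l) * if l = m then f (C l) else 1) := by
        exact Finset.sum_congr rfl fun C _ => (hL C).symm
    _ = _ := by rw [h, hR]

lemma marg_two {A : Type*} [Fintype A] {K : ℕ} (g f h : A → ℝ) (hg : ∑ a, g a = 1)
    {m j : Fin K} (hmj : m ≠ j) :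
    ∑ C : Fin K → A, (∏ l, g (C l)) * f (C m) * h (C j)
      = (∑ a, g a * f a) * (∑ a, g a * h a) := by
  set ψ : Fin K → A → ℝ := fun l a => if l = m then f a else if l = j then h a else 1 with hψ
  have key := sum_pi_prod (fun l a => g a * ψ l a)
  have hpair : ∀ (u : Fin K → ℝ), (∀ l, l ≠ m → l ≠ j → u l = 1) →
      (∏ l, u l) = u m * u j := by
    intro u hu
    rw [← Finset.prod_pair hmj]
    symm
    apply Finset.prod_subset (Finset.subset_univ _)
    intro x _ hx
    simp only [Finset.mem_insert, Finset.mem_singleton, not_or] at hx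
    exact hu x hx.1 hx.2
  have hL : ∀ C : Fin K → A,
      (∏ l, (g (C l) * ψ l (C l))) = (∏ l, g (C l)) * f (C m) * h (C j) := by
    intro C
    rw [Finset.prod_mul_distrib, hpair (fun l => ψ l (C l)) (by intro l h1 h2; simp [hψ, h1, h2])]
    simp [hψ, hmj, hmj.symm, mul_assoc]
  have hR : (∏ l : Fin K, ∑ a, g a * ψ l a) = (∑ a, g a * f a) * (∑ a, g a * h a) := by
    rw [hpair (fun l => ∑ a, g a * ψ l a) (by intro l h1 h2; simp [hψ, h1, h2, hg])]
    simp [hψ, hmj, hmj.symm]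
  calc ∑ C : Fin K → A, (∏ l, g (C l)) * f (C m) * h (C j)
      = ∑ C : Fin K → A, ∏ l, (g (C l) * ψ l (C l)) :=
        Finset.sum_congr rfl fun C _ => (hL C).symm
    _ = _ := by rw [key, hR]

lemma ite_nn {P : Prop} [Decidable P] {x : ℝ} (hx : 0 ≤ x) : 0 ≤ if P then x else 0 := by
  split <;> simp [hx]

lemma Pr_nonneg {Ω : Type*} [Fintype Ω] {μ : Ω → ℝ} (hμ : ∀ ω, 0 ≤ μ ω)
    (E : Ω → Prop) : 0 ≤ Pr μ E :=
  Finset.sum_nonneg fun ω _ => ite_nn (hμ ω)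

lemma Pr_mono3 {Ω : Type*} [Fintype Ω] {μ : Ω → ℝ} (hμ : ∀ ω, 0 ≤ μ ω)
    {E F G H : Ω → Prop} (h : ∀ ω, E ω → F ω ∨ G ω ∨ H ω) :
    Pr μ E ≤ Pr μ F + Pr μ G + Pr μ H := by
  unfold Pr
  rw [← Finset.sum_add_distrib, ← Finset.sum_add_distrib]
  apply Finset.sum_le_sum
  intro ω _
  have h1 : (0:ℝ) ≤ if F ω then μ ω else 0 := ite_nn (hμ ω)
  have h2 : (0:ℝ) ≤ if G ω then μ ω else 0 := ite_nn (hμ ω)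
  have h3 : (0:ℝ) ≤ if H ω then μ ω else 0 := ite_nn (hμ ω)
  by_cases hE : E ω
  · rcases h ω hE with hF | hG | hH
    · simp only [hE, if_pos, hF]; linarith
    · simp only [hE, if_pos, hG]; linarith
    · simp only [hE, if_pos, hH]; linarith
  · simp only [hE, if_neg, not_false_iff]; linarith

lemma Pr_exists_le {Ω ι : Type*} [Fintype Ω] [Fintype ι] {μ : Ω → ℝ}
    (hμ : ∀ ω, 0 ≤ μ ω) (P : ι → Ω → Prop) :
    Pr μ (fun ω => ∃ j, P j ω) ≤ ∑ j, Pr μ (P j) := by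
  unfold Pr
  rw [Finset.sum_comm]
  apply Finset.sum_le_sum
  intro ω _
  by_cases h : ∃ j, P j ω
  · obtain ⟨j0, hj0⟩ := h
    rw [if_pos ⟨j0, hj0⟩]
    calc μ ω = (if P j0 ω then μ ω else 0) := by rw [if_pos hj0]
      _ ≤ _ := Finset.single_le_sum (f := fun j => if P j ω then μ ω else 0)
          (fun j _ => ite_nn (hμ ω)) (Finset.mem_univ j0)
  · rw [if_neg h]
    exact Finset.sum_nonneg fun j _ => ite_nn (hμ ω)

lemma Pr_partition {Ω ι : Type*} [Fintype Ω] [Fintype ι] (μ : Ω → ℝ)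
    (E : Ω → Prop) (c : Ω → ι) :
    Pr μ E = ∑ m, Pr μ (fun ω => E ω ∧ c ω = m) := by
  unfold Pr
  rw [Finset.sum_comm]
  apply Finset.sum_congr rfl
  intro ω _
  by_cases hE : E ω
  · rw [Finset.sum_eq_single (c ω)]
    · simp [hE]
    · intro b _ hb
      rw [if_neg]
      rintro ⟨-, h⟩
      exact hb h.symm
    · simp
  · simp [hE]

lemma Pr_ens {SS X Y : Type*} [Fintype SS] [Fintype X] [Fintype Y] (n K : ℕ)
    (pS : SS → ℝ) (qs : SS → (Fin n → X) → ℝ) (w : X → Y → ℝ)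
    (E : EnsSpace SS X Y n K → Prop) :
    Pr (μens n K pS qs w) E =
      ∑ s, ∑ C : Fin K → Fin n → X, ∑ y : Fin n → Y, ∑ m,
        if E (s, C, y, m) then
          ((K : ℝ))⁻¹ * pS s * (∏ j, qs s (C j)) * ∏ i, w (C m i) (y i)
        else 0 := by
  unfold Pr μens
  rw [Fintype.sum_prod_type]
  refine Finset.sum_congr rfl fun s _ => ?_
  rw [Fintype.sum_prod_type]
  refine Finset.sum_congr rfl fun C _ => ?_
  rw [Fintype.sum_prod_type]

lemma crc_sum_collapse {ι : Type*} [Fintype ι] [DecidableEq ι] (m₀ : ι)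
    (P : ι → Prop) (F : ι → ℝ) [inst : ∀ m, Decidable (P m ∧ m = m₀)]
    [inst2 : Decidable (P m₀)] :
    ∑ m, (if P m ∧ m = m₀ then F m else 0) = if P m₀ then F m₀ else 0 := by
  rw [Finset.sum_eq_single m₀]
  · by_cases h : P m₀
    · rw [if_pos ⟨h, rfl⟩, if_pos h]
    · rw [if_neg (fun hc => h hc.1), if_neg h]
  · intro b _ hb
    rw [if_neg]
    rintro ⟨-, h⟩
    exact hb h
  · simp

lemma crc_sum_point {ι : Type*} [Fintype ι] [DecidableEq ι] (m₀ : ι)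
    (F : ι → ℝ) [inst : ∀ m : ι, Decidable (m = m₀)] :
    ∑ m, (if m = m₀ then F m else 0) = F m₀ := by
  rw [Finset.sum_eq_single m₀]
  · rw [if_pos rfl]
  · intro b _ hb
    rw [if_neg hb]
  · simp

lemma crc_sum_ite_mem {α : Type*} [Fintype α] (t : Finset α) (f : α → ℝ)
    [inst : ∀ x : α, Decidable (x ∈ t)] :
    ∑ x, (if x ∈ t then f x else 0) = ∑ x ∈ t, f x := by
  rw [← Finset.sum_subset (Finset.subset_univ t) (fun x _ hx => if_neg hx)]
  exact Finset.sum_congr rfl fun x hx => if_pos hx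

lemma crc_sum_drop {A : Type*} [Fintype A] (p : Prop) (hp : p) (Q : A → Prop)
    (v : A → ℝ) [inst : ∀ C, Decidable (p ∧ Q C)] [inst2 : ∀ C, Decidable (Q C)] :
    ∑ C, (if p ∧ Q C then v C else 0) = ∑ C, (if Q C then v C else 0) :=
  Finset.sum_congr rfl fun C _ => if_congr (and_iff_right hp) rfl rfl

section Comp
variable {SS X Y : Type*} [Fintype SS] [Fintype X] [Fintype Y]

lemma crc_PrM (n K : ℕ) (pS : SS → ℝ) (qs : SS → (Fin n → X) → ℝ) (w : X → Y → ℝ)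
    (hpS1 : ∑ s, pS s = 1) (hqs1 : ∀ s, ∑ x : Fin n → X, qs s x = 1)
    (hw1 : ∀ a, ∑ b, w a b = 1) (m₀ : Fin K) :
    Pr (μens n K pS qs w) (fun ω => ω.2.2.2 = m₀) = (K : ℝ)⁻¹ := by
  rw [Pr_ens]
  refine Eq.trans (Finset.sum_congr rfl fun s _ => Finset.sum_congr rfl fun C _ =>
    Finset.sum_congr rfl fun y _ =>
      crc_sum_point (inst := fun _ => Classical.propDecidable _) m₀
        (fun m => ((K : ℝ))⁻¹ * pS s * (∏ j, qs s (C j)) * ∏ i, w (C m i) (y i))) ?_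
  calc ∑ s, ∑ C : Fin K → Fin n → X, ∑ y : Fin n → Y,
        ((K : ℝ))⁻¹ * pS s * (∏ j, qs s (C j)) * ∏ i, w (C m₀ i) (y i)
      = ∑ s, ∑ C : Fin K → Fin n → X,
          ((K : ℝ))⁻¹ * pS s * (∏ j, qs s (C j)) := by
        refine Finset.sum_congr rfl fun s _ => Finset.sum_congr rfl fun C _ => ?_
        rw [← Finset.mul_sum, sum_pi_prod (fun i b => w (C m₀ i) b)]
        simp [hw1]
    _ = ∑ s, ((K : ℝ))⁻¹ * pS s := by
        refine Finset.sum_congr rfl fun s _ => ?_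
        rw [← Finset.mul_sum, sum_pi_prod (fun j x => qs s x)]
        simp [hqs1 s]
    _ = (K : ℝ)⁻¹ := by rw [← Finset.mul_sum, hpS1, mul_one]

/-- The unconditional probability that the true codeword is atypical. -/
noncomputable def crcC (n : ℕ) (pS : SS → ℝ) (qs : SS → (Fin n → X) → ℝ)
    (w : X → Y → ℝ) (T : Finset ((Fin n → X) × (Fin n → Y))) : ℝ :=
  ∑ s, ∑ x : Fin n → X, ∑ y : Fin n → Y,
    if (x, y) ∉ T then pS s * qs s x * ∏ i, w (x i) (y i) else 0

lemma crc_PrE1m (n K : ℕ) (pS : SS → ℝ) (qs : SS → (Fin n → X) → ℝ)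
    (w : X → Y → ℝ) (hqs1 : ∀ s, ∑ x : Fin n → X, qs s x = 1)
    (T : Finset ((Fin n → X) × (Fin n → Y))) (m₀ : Fin K) :
    Pr (μens n K pS qs w)
        (fun ω => (ω.2.1 ω.2.2.2, ω.2.2.1) ∉ T ∧ ω.2.2.2 = m₀)
      = (K : ℝ)⁻¹ * crcC n pS qs w T := by
  rw [Pr_ens]
  refine Eq.trans (Finset.sum_congr rfl fun s _ => Finset.sum_congr rfl fun C _ =>
    Finset.sum_congr rfl fun y _ =>
      crc_sum_collapse (inst := fun _ => Classical.propDecidable _) m₀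
        (fun m => (C m, y) ∉ T)
        (fun m => ((K : ℝ))⁻¹ * pS s * (∏ j, qs s (C j)) * ∏ i, w (C m i) (y i))) ?_
  calc ∑ s, ∑ C : Fin K → Fin n → X, ∑ y : Fin n → Y,
        (if (C m₀, y) ∉ T then
          ((K : ℝ))⁻¹ * pS s * (∏ j, qs s (C j)) * ∏ i, w (C m₀ i) (y i) else 0)
      = ∑ s, ∑ x : Fin n → X, qs s x *
          ∑ y : Fin n → Y, (if (x, y) ∉ T then
            ((K : ℝ))⁻¹ * pS s * ∏ i, w (x i) (y i) else 0) := by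
        refine Finset.sum_congr rfl fun s _ => ?_
        calc ∑ C : Fin K → Fin n → X, ∑ y : Fin n → Y,
            (if (C m₀, y) ∉ T then
              ((K : ℝ))⁻¹ * pS s * (∏ j, qs s (C j)) * ∏ i, w (C m₀ i) (y i) else 0)
            = ∑ C : Fin K → Fin n → X, (∏ j, qs s (C j)) *
                ∑ y : Fin n → Y, (if (C m₀, y) ∉ T then
                  ((K : ℝ))⁻¹ * pS s * ∏ i, w (C m₀ i) (y i) else 0) := by
              refine Finset.sum_congr rfl fun C _ => ?_
              rw [Finset.mul_sum]
              refine Finset.sum_congr rfl fun y _ => ?_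
              by_cases h : (C m₀, y) ∉ T
              · rw [if_pos h, if_pos h]; ring
              · rw [if_neg h, if_neg h]; ring
          _ = _ := marg_one (qs s)
              (fun x => ∑ y : Fin n → Y, (if (x, y) ∉ T then
                ((K : ℝ))⁻¹ * pS s * ∏ i, w (x i) (y i) else 0)) (hqs1 s) m₀
    _ = (K : ℝ)⁻¹ * crcC n pS qs w T := by
        unfold crcC
        rw [Finset.mul_sum]
        refine Finset.sum_congr rfl fun s _ => ?_
        rw [Finset.mul_sum]
        refine Finset.sum_congr rfl fun x _ => ?_
        rw [Finset.mul_sum, Finset.mul_sum]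
        refine Finset.sum_congr rfl fun y _ => ?_
        by_cases h : (x, y) ∉ T
        · rw [if_pos h, if_pos h]; ring
        · rw [if_neg h, if_neg h]; ring

lemma crc_margY (n : ℕ) (q : X → ℝ) (pS : SS → ℝ) (qs : SS → (Fin n → X) → ℝ)
    (w : X → Y → ℝ)
    (hmarg : ∀ x : Fin n → X, ∑ s, pS s * qs s x = ∏ i, q (x i)) (y : Fin n → Y) :
    ∑ s, pS s * ∑ x : Fin n → X, qs s x * ∏ i, w (x i) (y i)
      = ∏ i, ∑ a, q a * w a (y i) := by
  calc ∑ s, pS s * ∑ x : Fin n → X, qs s x * ∏ i, w (x i) (y i)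
      = ∑ s, ∑ x : Fin n → X, pS s * qs s x * ∏ i, w (x i) (y i) := by
        refine Finset.sum_congr rfl fun s _ => ?_
        rw [Finset.mul_sum]
        exact Finset.sum_congr rfl fun x _ => by ring
    _ = ∑ x : Fin n → X, ∑ s, pS s * qs s x * ∏ i, w (x i) (y i) := Finset.sum_comm
    _ = ∑ x : Fin n → X, (∏ i, q (x i)) * ∏ i, w (x i) (y i) := by
        refine Finset.sum_congr rfl fun x _ => ?_
        rw [← Finset.sum_mul, hmarg]
    _ = ∑ x : Fin n → X, ∏ i, (q (x i) * w (x i) (y i)) := by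
        refine Finset.sum_congr rfl fun x _ => ?_
        rw [Finset.prod_mul_distrib]
    _ = ∏ i, ∑ a, q a * w a (y i) := sum_pi_prod (fun i a => q a * w a (y i))

lemma crc_key (n : ℕ) (q : X → ℝ) (w : X → Y → ℝ) (pS : SS → ℝ)
    (qs : SS → (Fin n → X) → ℝ) (hq0 : ∀ a, 0 ≤ q a) (hw0 : ∀ a b, 0 ≤ w a b)
    (hpS0 : ∀ s, 0 ≤ pS s) (hqs0 : ∀ s x, 0 ≤ qs s x)
    (hmarg : ∀ x : Fin n → X, ∑ s, pS s * qs s x = ∏ i, q (x i)) (γ : ℝ)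
    (s : SS) (y : Fin n → Y)
    (h : ¬((n : ℝ) * γ < infoD n q w pS qs s y)) :
    pS s * ∑ x : Fin n → X, qs s x * ∏ i, w (x i) (y i)
      ≤ (2 : ℝ) ^ ((n : ℝ) * γ) * (pS s * ∏ i, ∑ a, q a * w a (y i)) := by
  push_neg at h
  set N := pS s * ∑ x : Fin n → X, qs s x * ∏ i, w (x i) (y i) with hN
  set D := pS s * ∏ i, ∑ a, q a * w a (y i) with hD
  have hN0 : 0 ≤ N := mul_nonneg (hpS0 s) (Finset.sum_nonneg fun x _ =>
    mul_nonneg (hqs0 s x) (Finset.prod_nonneg fun i _ => hw0 _ _))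
  have hD0 : 0 ≤ D := mul_nonneg (hpS0 s) (Finset.prod_nonneg fun i _ =>
    Finset.sum_nonneg fun a _ => mul_nonneg (hq0 a) (hw0 a _))
  rcases hD0.eq_or_lt with hDz | hDpos
  · -- D = 0 : then N = 0
    have hNz : N = 0 := by
      rcases mul_eq_zero.mp hDz.symm with hp | ht
      · rw [hN, hp, zero_mul]
      · have hsum : ∑ s', pS s' * ∑ x : Fin n → X, qs s' x * ∏ i, w (x i) (y i) = 0 := by
          rw [crc_margY n q pS qs w hmarg y, ht]
        have := (Finset.sum_eq_zero_iff_of_nonneg (fun s' _ =>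
          mul_nonneg (hpS0 s') (Finset.sum_nonneg fun x _ =>
            mul_nonneg (hqs0 s' x) (Finset.prod_nonneg fun i _ => hw0 _ _)))).mp hsum
        exact this s (Finset.mem_univ s)
    rw [hNz]
    exact mul_nonneg (Real.rpow_nonneg (by norm_num) _) hD0
  · rcases hN0.eq_or_lt with hNz | hNpos
    · rw [← hNz]
      exact mul_nonneg (Real.rpow_nonneg (by norm_num) _) hD0
    · have hlog : Real.logb 2 (N / D) ≤ (n : ℝ) * γ := h
      have hdiv : N / D ≤ (2 : ℝ) ^ ((n : ℝ) * γ) := by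
        calc N / D = (2 : ℝ) ^ Real.logb 2 (N / D) :=
              (Real.rpow_logb (by norm_num) (by norm_num) (div_pos hNpos hDpos)).symm
          _ ≤ _ := Real.rpow_le_rpow_of_exponent_le one_le_two hlog
      exact (div_le_iff₀ hDpos).mp hdiv

set_option maxHeartbeats 1000000 in
lemma crc_badm (n K : ℕ) (q : X → ℝ) (pS : SS → ℝ) (qs : SS → (Fin n → X) → ℝ)
    (w : X → Y → ℝ) (hq0 : ∀ a, 0 ≤ q a) (hw0 : ∀ a b, 0 ≤ w a b)
    (hpS0 : ∀ s, 0 ≤ pS s) (hqs0 : ∀ s x, 0 ≤ qs s x)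
    (hqs1 : ∀ s, ∑ x : Fin n → X, qs s x = 1)
    (hmarg : ∀ x : Fin n → X, ∑ s, pS s * qs s x = ∏ i, q (x i)) (γ : ℝ)
    (T : Finset ((Fin n → X) × (Fin n → Y))) {j m : Fin K} (hmj : m ≠ j) :
    Pr (μens n K pS qs w) (fun ω => (j ≠ ω.2.2.2 ∧ (ω.2.1 j, ω.2.2.1) ∈ T ∧
        ¬((n : ℝ) * γ < infoD n q w pS qs ω.1 ω.2.2.1)) ∧ ω.2.2.2 = m)
      ≤ (K : ℝ)⁻¹ * ((2 : ℝ) ^ ((n : ℝ) * γ) *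
          ∑ p ∈ T, (∏ i, q (p.1 i)) * ∏ i, ∑ a, q a * w a (p.2 i)) := by
  have hK0 : (0:ℝ) ≤ (K : ℝ)⁻¹ := inv_nonneg.mpr (Nat.cast_nonneg K)
  have h2γ : (0:ℝ) ≤ (2 : ℝ) ^ ((n : ℝ) * γ) := Real.rpow_nonneg (by norm_num) _
  have htY0 : ∀ y : Fin n → Y, (0:ℝ) ≤ ∏ i, ∑ a, q a * w a (y i) := fun y =>
    Finset.prod_nonneg fun i _ => Finset.sum_nonneg fun a _ => mul_nonneg (hq0 a) (hw0 a _)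
  have hqsT0 : ∀ s (y : Fin n → Y),
      (0:ℝ) ≤ ∑ x : Fin n → X, if (x, y) ∈ T then qs s x else 0 := fun s y =>
    Finset.sum_nonneg fun x _ => ite_nn (hqs0 s x)
  rw [Pr_ens]
  refine le_of_eq_of_le (Finset.sum_congr rfl fun s _ =>
    Eq.trans (Finset.sum_congr rfl fun C _ => Finset.sum_congr rfl fun y _ =>
      crc_sum_collapse (inst := fun _ => Classical.propDecidable _) m
        (fun m' => j ≠ m' ∧ (C j, y) ∈ T ∧ ¬((n : ℝ) * γ < infoD n q w pS qs s y))
        (fun m' => ((K : ℝ))⁻¹ * pS s * (∏ l, qs s (C l)) * ∏ i, w (C m' i) (y i)))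
      Finset.sum_comm) ?_
  refine le_of_eq_of_le (Finset.sum_congr rfl fun s _ => Finset.sum_congr rfl fun y _ =>
    crc_sum_drop (A := Fin K → Fin n → X) (j ≠ m) (Ne.symm hmj)
      (fun C => (C j, y) ∈ T ∧ ¬((n : ℝ) * γ < infoD n q w pS qs s y))
      (fun C => ((K : ℝ))⁻¹ * pS s * (∏ l, qs s (C l)) * ∏ i, w (C m i) (y i))) ?_
  calc ∑ s, ∑ y : Fin n → Y, ∑ C : Fin K → Fin n → X,
          (if (C j, y) ∈ T ∧ ¬((n : ℝ) * γ < infoD n q w pS qs s y) then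
            ((K : ℝ))⁻¹ * pS s * (∏ l, qs s (C l)) * ∏ i, w (C m i) (y i) else 0)
      ≤ ∑ s, ∑ y : Fin n → Y,
          ((K : ℝ)⁻¹ * (2 : ℝ) ^ ((n : ℝ) * γ)) *
            ((pS s * ∏ i, ∑ a, q a * w a (y i)) *
              ∑ x : Fin n → X, if (x, y) ∈ T then qs s x else 0) := by
        refine Finset.sum_le_sum fun s _ => Finset.sum_le_sum fun y _ => ?_
        by_cases hA : (n : ℝ) * γ < infoD n q w pS qs s y
        · rw [Finset.sum_eq_zero fun C _ => if_neg (fun hc => hc.2 hA)]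
          exact mul_nonneg (mul_nonneg hK0 h2γ)
            (mul_nonneg (mul_nonneg (hpS0 s) (htY0 y)) (hqsT0 s y))
        · calc ∑ C : Fin K → Fin n → X,
              (if (C j, y) ∈ T ∧ ¬((n : ℝ) * γ < infoD n q w pS qs s y) then
                ((K : ℝ))⁻¹ * pS s * (∏ l, qs s (C l)) * ∏ i, w (C m i) (y i) else 0)
              = ∑ C : Fin K → Fin n → X, (∏ l, qs s (C l)) *
                  (((K : ℝ))⁻¹ * pS s * ∏ i, w (C m i) (y i)) *
                  (if (C j, y) ∈ T then (1:ℝ) else 0) := by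
                refine Finset.sum_congr rfl fun C _ => ?_
                by_cases hT : (C j, y) ∈ T
                · rw [if_pos ⟨hT, hA⟩, if_pos hT]; ring
                · rw [if_neg (fun hc => hT hc.1), if_neg hT]; ring
            _ = (∑ x : Fin n → X, qs s x * (((K : ℝ))⁻¹ * pS s * ∏ i, w (x i) (y i))) *
                  (∑ x : Fin n → X, qs s x * (if (x, y) ∈ T then (1:ℝ) else 0)) :=
                marg_two (qs s) (fun x => ((K : ℝ))⁻¹ * pS s * ∏ i, w (x i) (y i))
                  (fun x => if (x, y) ∈ T then (1:ℝ) else 0) (hqs1 s) hmj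
            _ = ((K : ℝ)⁻¹ * (pS s * ∑ x : Fin n → X, qs s x * ∏ i, w (x i) (y i))) *
                  (∑ x : Fin n → X, if (x, y) ∈ T then qs s x else 0) := by
                congr 1
                · rw [Finset.mul_sum, Finset.mul_sum]
                  exact Finset.sum_congr rfl fun x _ => by ring
                · refine Finset.sum_congr rfl fun x _ => ?_
                  by_cases hT : (x, y) ∈ T
                  · rw [if_pos hT, if_pos hT, mul_one]
                  · rw [if_neg hT, if_neg hT, mul_zero]
            _ ≤ ((K : ℝ)⁻¹ * (2 : ℝ) ^ ((n : ℝ) * γ)) *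
                  ((pS s * ∏ i, ∑ a, q a * w a (y i)) *
                    ∑ x : Fin n → X, if (x, y) ∈ T then qs s x else 0) := by
                have hb := crc_key n q w pS qs hq0 hw0 hpS0 hqs0 hmarg γ s y hA
                calc ((K : ℝ)⁻¹ * (pS s * ∑ x : Fin n → X, qs s x * ∏ i, w (x i) (y i))) *
                      (∑ x : Fin n → X, if (x, y) ∈ T then qs s x else 0)
                    ≤ ((K : ℝ)⁻¹ * ((2 : ℝ) ^ ((n : ℝ) * γ) *
                        (pS s * ∏ i, ∑ a, q a * w a (y i)))) *
                      (∑ x : Fin n → X, if (x, y) ∈ T then qs s x else 0) :=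
                      mul_le_mul_of_nonneg_right
                        (mul_le_mul_of_nonneg_left hb hK0) (hqsT0 s y)
                  _ = _ := by ring
    _ = (K : ℝ)⁻¹ * ((2 : ℝ) ^ ((n : ℝ) * γ) *
          ∑ p ∈ T, (∏ i, q (p.1 i)) * ∏ i, ∑ a, q a * w a (p.2 i)) := by
        have pull : ∑ s, ∑ y : Fin n → Y,
            ((K : ℝ)⁻¹ * (2 : ℝ) ^ ((n : ℝ) * γ)) *
              ((pS s * ∏ i, ∑ a, q a * w a (y i)) *
                ∑ x : Fin n → X, if (x, y) ∈ T then qs s x else 0)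
            = ((K : ℝ)⁻¹ * (2 : ℝ) ^ ((n : ℝ) * γ)) *
              ∑ s, ∑ y : Fin n → Y,
                ((pS s * ∏ i, ∑ a, q a * w a (y i)) *
                  ∑ x : Fin n → X, if (x, y) ∈ T then qs s x else 0) := by
          rw [Finset.mul_sum]
          exact Finset.sum_congr rfl fun s _ => by rw [Finset.mul_sum]
        rw [pull]
        have e : ∑ s, ∑ y : Fin n → Y,
            ((pS s * ∏ i, ∑ a, q a * w a (y i)) *
              ∑ x : Fin n → X, if (x, y) ∈ T then qs s x else 0)
            = ∑ p ∈ T, (∏ i, q (p.1 i)) * ∏ i, ∑ a, q a * w a (p.2 i) := by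
          calc ∑ s, ∑ y : Fin n → Y,
              ((pS s * ∏ i, ∑ a, q a * w a (y i)) *
                ∑ x : Fin n → X, if (x, y) ∈ T then qs s x else 0)
              = ∑ s, ∑ y : Fin n → Y, ∑ x : Fin n → X,
                  (if (x, y) ∈ T then
                    (pS s * qs s x) * ∏ i, ∑ a, q a * w a (y i) else 0) := by
                refine Finset.sum_congr rfl fun s _ => Finset.sum_congr rfl fun y _ => ?_
                rw [Finset.mul_sum]
                refine Finset.sum_congr rfl fun x _ => ?_
                by_cases hT : (x, y) ∈ T
                · rw [if_pos hT, if_pos hT]; ring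
                · rw [if_neg hT, if_neg hT, mul_zero]
            _ = ∑ y : Fin n → Y, ∑ x : Fin n → X, ∑ s,
                  (if (x, y) ∈ T then
                    (pS s * qs s x) * ∏ i, ∑ a, q a * w a (y i) else 0) := by
                refine Eq.trans Finset.sum_comm (Finset.sum_congr rfl fun y _ => ?_)
                exact Finset.sum_comm
            _ = ∑ y : Fin n → Y, ∑ x : Fin n → X,
                  (if (x, y) ∈ T then
                    (∏ i, q (x i)) * ∏ i, ∑ a, q a * w a (y i) else 0) := by
                refine Finset.sum_congr rfl fun y _ => Finset.sum_congr rfl fun x _ => ?_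
                by_cases hT : (x, y) ∈ T
                · simp only [if_pos hT]
                  rw [← Finset.sum_mul, hmarg]
                · simp only [if_neg hT, Finset.sum_const_zero]
            _ = ∑ x : Fin n → X, ∑ y : Fin n → Y,
                  (if (x, y) ∈ T then
                    (∏ i, q (x i)) * ∏ i, ∑ a, q a * w a (y i) else 0) := Finset.sum_comm
            _ = ∑ p : (Fin n → X) × (Fin n → Y),
                  (if p ∈ T then (∏ i, q (p.1 i)) * ∏ i, ∑ a, q a * w a (p.2 i) else 0) :=
                (Fintype.sum_prod_type (f := fun p : (Fin n → X) × (Fin n → Y) =>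
                  if p ∈ T then (∏ i, q (p.1 i)) * ∏ i, ∑ a, q a * w a (p.2 i) else 0)).symm
            _ = ∑ p ∈ T, (∏ i, q (p.1 i)) * ∏ i, ∑ a, q a * w a (p.2 i) :=
                crc_sum_ite_mem T _
        rw [e]
        ring

end Comp

/-- Under the constrained random-coding ensemble with joint
typicality decoding,
`P(E) ≤ P(E₁|M=1) + P(A) + 2^{n(R − I(X;Y) + γ + δ(ε))}`, where `δ(ε) → 0` as
`ε → 0` (as provided by the joint typicality lemma
`∑_{(xⁿ,yⁿ)∈T_ε} qⁿ(xⁿ) tⁿ(yⁿ) ≤ 2^{−n(I(X;Y) − δ(ε))}`); consequently, if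
`R < I(X;Y) − γ`, `P(E₁|M=1) → 0` and `P(A) → 0`, then `P(E) → 0` as
`n → ∞` (for a suitably small `ε > 0`).  The number of messages `K n`
satisfies `K n ≤ 2^{nR}` (rate `R`). -/
theorem constrained_random_coding_packing
    {X Y : Type*} [Fintype X] [Fintype Y]
    (S : ℕ → Type*) [∀ n, Fintype (S n)]
    (q : X → ℝ) (hq0 : ∀ a, 0 ≤ q a) (hq1 : ∑ a, q a = 1)
    (w : X → Y → ℝ) (hw0 : ∀ a b, 0 ≤ w a b) (hw1 : ∀ a, ∑ b, w a b = 1)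
    (pS : (n : ℕ) → S n → ℝ) (hpS0 : ∀ n s, 0 ≤ pS n s)
    (hpS1 : ∀ n, ∑ s, pS n s = 1)
    (qs : (n : ℕ) → S n → (Fin n → X) → ℝ) (hqs0 : ∀ n s x, 0 ≤ qs n s x)
    (hqs1 : ∀ n s, ∑ x : Fin n → X, qs n s x = 1)
    (hmarg : ∀ n (x : Fin n → X), ∑ s, pS n s * qs n s x = ∏ i, q (x i))
    (K : ℕ → ℕ) (hK : ∀ n, 0 < K n)
    (R : ℝ) (hKR : ∀ n, (K n : ℝ) ≤ 2 ^ ((n : ℝ) * R))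
    (γ : ℝ) (δ : ℝ → ℝ)
    (hδ : Filter.Tendsto δ (nhdsWithin 0 (Set.Ioi 0)) (nhds 0))
    (T : (n : ℕ) → ℝ → Finset ((Fin n → X) × (Fin n → Y)))
    (hJT : ∀ n (ε : ℝ), 0 < ε →
      ∑ p ∈ T n ε, (∏ i, q (p.1 i)) * ∏ i, ∑ a, q a * w a (p.2 i)
        ≤ (2 : ℝ) ^ (-(n : ℝ) * (Ixy q w - δ ε))) :
    (∀ n (ε : ℝ), 0 < ε →
      PE n (K n) (pS n) (qs n) w (T n ε)
        ≤ PE1cond n (K n) (pS n) (qs n) w (T n ε) (⟨0, hK n⟩ : Fin (K n))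
          + PA n (K n) q (pS n) (qs n) w γ
          + (2 : ℝ) ^ ((n : ℝ) * (R - Ixy q w + γ + δ ε)))
    ∧ (R < Ixy q w - γ →
        (∀ ε : ℝ, 0 < ε →
          Filter.Tendsto
            (fun n => PE1cond n (K n) (pS n) (qs n) w (T n ε)
              (⟨0, hK n⟩ : Fin (K n)))
            Filter.atTop (nhds 0)) →
        Filter.Tendsto (fun n => PA n (K n) q (pS n) (qs n) w γ)
          Filter.atTop (nhds 0) →
        ∃ ε : ℝ, 0 < ε ∧
          Filter.Tendsto (fun n => PE n (K n) (pS n) (qs n) w (T n ε))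
            Filter.atTop (nhds 0)) := by
  have hμ0 : ∀ n (ω : EnsSpace (S n) X Y n (K n)),
      0 ≤ μens n (K n) (pS n) (qs n) w ω := by
    intro n ω
    refine mul_nonneg (mul_nonneg (mul_nonneg ?_ ?_) ?_) ?_
    · exact inv_nonneg.mpr (Nat.cast_nonneg _)
    · exact hpS0 n _
    · exact Finset.prod_nonneg fun jj _ => hqs0 n _ _
    · exact Finset.prod_nonneg fun i _ => hw0 _ _
  have hpart1 : ∀ n (ε : ℝ), 0 < ε →
      PE n (K n) (pS n) (qs n) w (T n ε)
        ≤ PE1cond n (K n) (pS n) (qs n) w (T n ε) (⟨0, hK n⟩ : Fin (K n))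
          + PA n (K n) q (pS n) (qs n) w γ
          + (2 : ℝ) ^ ((n : ℝ) * (R - Ixy q w + γ + δ ε)) := by
    intro n ε hε
    have hKne : ((K n : ℝ)) ≠ 0 := Nat.cast_ne_zero.mpr (hK n).ne'
    have h2γ : (0:ℝ) ≤ (2 : ℝ) ^ ((n : ℝ) * γ) := Real.rpow_nonneg (by norm_num) _
    have hT0 : (0:ℝ) ≤ ∑ p ∈ T n ε, (∏ i, q (p.1 i)) * ∏ i, ∑ a, q a * w a (p.2 i) :=
      Finset.sum_nonneg fun p _ => mul_nonneg
        (Finset.prod_nonneg fun i _ => hq0 _)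
        (Finset.prod_nonneg fun i _ => Finset.sum_nonneg fun a _ =>
          mul_nonneg (hq0 a) (hw0 a _))
    -- Step 1 : union bound decomposition
    have hsplit : PE n (K n) (pS n) (qs n) w (T n ε)
        ≤ Pr (μens n (K n) (pS n) (qs n) w)
            (fun ω => (ω.2.1 ω.2.2.2, ω.2.2.1) ∉ T n ε)
          + PA n (K n) q (pS n) (qs n) w γ
          + Pr (μens n (K n) (pS n) (qs n) w) (fun ω => ∃ j : Fin (K n),
              j ≠ ω.2.2.2 ∧ (ω.2.1 j, ω.2.2.1) ∈ T n ε ∧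
                ¬((n : ℝ) * γ < infoD n q w (pS n) (qs n) ω.1 ω.2.2.1)) := by
      refine Pr_mono3 (hμ0 n) ?_
      intro ω h
      by_cases h1 : (ω.2.1 ω.2.2.2, ω.2.2.1) ∈ T n ε
      · by_cases hA : (n : ℝ) * γ < infoD n q w (pS n) (qs n) ω.1 ω.2.2.1
        · exact Or.inr (Or.inl hA)
        · have h2 : ¬ ∀ j, j ≠ ω.2.2.2 → (ω.2.1 j, ω.2.2.1) ∉ T n ε :=
            fun hall => h ⟨h1, hall⟩
          push_neg at h2
          obtain ⟨j, hj1, hj2⟩ := h2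
          exact Or.inr (Or.inr ⟨j, hj1, hj2, hA⟩)
      · exact Or.inl h1
    -- Step 2 : the E1 term equals PE1cond
    have hE1 : Pr (μens n (K n) (pS n) (qs n) w)
        (fun ω => (ω.2.1 ω.2.2.2, ω.2.2.1) ∉ T n ε)
        = PE1cond n (K n) (pS n) (qs n) w (T n ε) (⟨0, hK n⟩ : Fin (K n)) := by
      calc Pr (μens n (K n) (pS n) (qs n) w)
            (fun ω => (ω.2.1 ω.2.2.2, ω.2.2.1) ∉ T n ε)
          = ∑ m : Fin (K n), Pr (μens n (K n) (pS n) (qs n) w)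
              (fun ω => (ω.2.1 ω.2.2.2, ω.2.2.1) ∉ T n ε ∧ ω.2.2.2 = m) :=
            Pr_partition _ _ (fun ω : EnsSpace (S n) X Y n (K n) => ω.2.2.2)
        _ = ∑ _m : Fin (K n), (K n : ℝ)⁻¹ * crcC n (pS n) (qs n) w (T n ε) :=
            Finset.sum_congr rfl fun m _ =>
              crc_PrE1m n (K n) (pS n) (qs n) w (hqs1 n) (T n ε) m
        _ = (K n : ℝ) * ((K n : ℝ)⁻¹ * crcC n (pS n) (qs n) w (T n ε)) := by
            rw [Finset.sum_const, Finset.card_univ, Fintype.card_fin, nsmul_eq_mul]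
        _ = crcC n (pS n) (qs n) w (T n ε) := by
            rw [← mul_assoc, mul_inv_cancel₀ hKne, one_mul]
        _ = PE1cond n (K n) (pS n) (qs n) w (T n ε) (⟨0, hK n⟩ : Fin (K n)) := by
            unfold PE1cond
            rw [crc_PrE1m n (K n) (pS n) (qs n) w (hqs1 n) (T n ε) ⟨0, hK n⟩,
              crc_PrM n (K n) (pS n) (qs n) w (hpS1 n) (hqs1 n) hw1 ⟨0, hK n⟩]
            rw [mul_comm, mul_div_assoc, div_self (inv_ne_zero hKne), mul_one]
    -- Step 3 : the packing term
    have hbad : Pr (μens n (K n) (pS n) (qs n) w) (fun ω => ∃ j : Fin (K n),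
          j ≠ ω.2.2.2 ∧ (ω.2.1 j, ω.2.2.1) ∈ T n ε ∧
            ¬((n : ℝ) * γ < infoD n q w (pS n) (qs n) ω.1 ω.2.2.1))
        ≤ (2 : ℝ) ^ ((n : ℝ) * (R - Ixy q w + γ + δ ε)) := by
      have hjle : ∀ j : Fin (K n),
          Pr (μens n (K n) (pS n) (qs n) w) (fun ω =>
            j ≠ ω.2.2.2 ∧ (ω.2.1 j, ω.2.2.1) ∈ T n ε ∧
              ¬((n : ℝ) * γ < infoD n q w (pS n) (qs n) ω.1 ω.2.2.1))
            ≤ (2 : ℝ) ^ ((n : ℝ) * γ) *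
              ∑ p ∈ T n ε, (∏ i, q (p.1 i)) * ∏ i, ∑ a, q a * w a (p.2 i) := by
        intro j
        have heach : ∀ m : Fin (K n),
            Pr (μens n (K n) (pS n) (qs n) w) (fun ω =>
              (j ≠ ω.2.2.2 ∧ (ω.2.1 j, ω.2.2.1) ∈ T n ε ∧
                ¬((n : ℝ) * γ < infoD n q w (pS n) (qs n) ω.1 ω.2.2.1)) ∧ ω.2.2.2 = m)
              ≤ (K n : ℝ)⁻¹ * ((2 : ℝ) ^ ((n : ℝ) * γ) *
                ∑ p ∈ T n ε, (∏ i, q (p.1 i)) * ∏ i, ∑ a, q a * w a (p.2 i)) := by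
          intro m
          by_cases hmj : m = j
          · subst hmj
            have hz : Pr (μens n (K n) (pS n) (qs n) w) (fun ω =>
                (m ≠ ω.2.2.2 ∧ (ω.2.1 m, ω.2.2.1) ∈ T n ε ∧
                  ¬((n : ℝ) * γ < infoD n q w (pS n) (qs n) ω.1 ω.2.2.1)) ∧ ω.2.2.2 = m)
                = 0 := by
              refine Finset.sum_eq_zero fun ω _ => if_neg ?_
              rintro ⟨⟨hne, -⟩, heq⟩
              exact hne heq.symm
            rw [hz]
            exact mul_nonneg (inv_nonneg.mpr (Nat.cast_nonneg _)) (mul_nonneg h2γ hT0)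
          · exact crc_badm n (K n) q (pS n) (qs n) w hq0 hw0 (hpS0 n) (hqs0 n)
              (hqs1 n) (hmarg n) γ (T n ε) hmj
        calc Pr (μens n (K n) (pS n) (qs n) w) (fun ω =>
              j ≠ ω.2.2.2 ∧ (ω.2.1 j, ω.2.2.1) ∈ T n ε ∧
                ¬((n : ℝ) * γ < infoD n q w (pS n) (qs n) ω.1 ω.2.2.1))
            = ∑ m : Fin (K n), Pr (μens n (K n) (pS n) (qs n) w) (fun ω =>
                (j ≠ ω.2.2.2 ∧ (ω.2.1 j, ω.2.2.1) ∈ T n ε ∧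
                  ¬((n : ℝ) * γ < infoD n q w (pS n) (qs n) ω.1 ω.2.2.1)) ∧ ω.2.2.2 = m) :=
              Pr_partition _ _ (fun ω : EnsSpace (S n) X Y n (K n) => ω.2.2.2)
          _ ≤ ∑ _m : Fin (K n), (K n : ℝ)⁻¹ * ((2 : ℝ) ^ ((n : ℝ) * γ) *
                ∑ p ∈ T n ε, (∏ i, q (p.1 i)) * ∏ i, ∑ a, q a * w a (p.2 i)) :=
              Finset.sum_le_sum fun m _ => heach m
          _ = (K n : ℝ) * ((K n : ℝ)⁻¹ * ((2 : ℝ) ^ ((n : ℝ) * γ) *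
                ∑ p ∈ T n ε, (∏ i, q (p.1 i)) * ∏ i, ∑ a, q a * w a (p.2 i))) := by
              rw [Finset.sum_const, Finset.card_univ, Fintype.card_fin, nsmul_eq_mul]
          _ = (2 : ℝ) ^ ((n : ℝ) * γ) *
                ∑ p ∈ T n ε, (∏ i, q (p.1 i)) * ∏ i, ∑ a, q a * w a (p.2 i) := by
              rw [← mul_assoc, mul_inv_cancel₀ hKne, one_mul]
      calc Pr (μens n (K n) (pS n) (qs n) w) (fun ω => ∃ j : Fin (K n),
            j ≠ ω.2.2.2 ∧ (ω.2.1 j, ω.2.2.1) ∈ T n ε ∧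
              ¬((n : ℝ) * γ < infoD n q w (pS n) (qs n) ω.1 ω.2.2.1))
          ≤ ∑ j : Fin (K n), Pr (μens n (K n) (pS n) (qs n) w) (fun ω =>
              j ≠ ω.2.2.2 ∧ (ω.2.1 j, ω.2.2.1) ∈ T n ε ∧
                ¬((n : ℝ) * γ < infoD n q w (pS n) (qs n) ω.1 ω.2.2.1)) :=
            Pr_exists_le (hμ0 n) _
        _ ≤ ∑ _j : Fin (K n), ((2 : ℝ) ^ ((n : ℝ) * γ) *
              ∑ p ∈ T n ε, (∏ i, q (p.1 i)) * ∏ i, ∑ a, q a * w a (p.2 i)) :=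
            Finset.sum_le_sum fun j _ => hjle j
        _ = (K n : ℝ) * ((2 : ℝ) ^ ((n : ℝ) * γ) *
              ∑ p ∈ T n ε, (∏ i, q (p.1 i)) * ∏ i, ∑ a, q a * w a (p.2 i)) := by
            rw [Finset.sum_const, Finset.card_univ, Fintype.card_fin, nsmul_eq_mul]
        _ ≤ (2 : ℝ) ^ ((n : ℝ) * R) * ((2 : ℝ) ^ ((n : ℝ) * γ) *
              (2 : ℝ) ^ (-(n : ℝ) * (Ixy q w - δ ε))) := by
            refine mul_le_mul (hKR n) (mul_le_mul_of_nonneg_left (hJT n ε hε) h2γ)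
              (mul_nonneg h2γ hT0) (Real.rpow_nonneg (by norm_num) _)
        _ = (2 : ℝ) ^ ((n : ℝ) * (R - Ixy q w + γ + δ ε)) := by
            rw [← Real.rpow_add (by norm_num : (0:ℝ) < 2),
              ← Real.rpow_add (by norm_num : (0:ℝ) < 2)]
            rw [show (n : ℝ) * R + ((n : ℝ) * γ + -(n : ℝ) * (Ixy q w - δ ε))
              = (n : ℝ) * (R - Ixy q w + γ + δ ε) from by ring]
    linarith [hsplit, hbad, hE1.le, hE1.ge]
  refine ⟨hpart1, ?_⟩
  intro hR h1 h2
  have hc : (0:ℝ) < Ixy q w - γ - R := by linarith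
  have hev : ∀ᶠ ε in nhdsWithin (0:ℝ) (Set.Ioi 0), δ ε < Ixy q w - γ - R :=
    hδ.eventually_lt_const hc
  have hmem : ∀ᶠ ε in nhdsWithin (0:ℝ) (Set.Ioi 0), ε ∈ Set.Ioi (0:ℝ) :=
    eventually_mem_nhdsWithin
  obtain ⟨ε, hδε, hεpos⟩ := (hev.and hmem).exists
  refine ⟨ε, hεpos, ?_⟩
  have hneg : (R - Ixy q w + γ + δ ε) < 0 := by linarith
  have hr0 : (0:ℝ) ≤ (2 : ℝ) ^ (R - Ixy q w + γ + δ ε) :=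
    Real.rpow_nonneg (by norm_num) _
  have hr1 : (2 : ℝ) ^ (R - Ixy q w + γ + δ ε) < 1 :=
    Real.rpow_lt_one_of_one_lt_of_neg one_lt_two hneg
  have hgeo : Filter.Tendsto
      (fun nn : ℕ => (2 : ℝ) ^ ((nn : ℝ) * (R - Ixy q w + γ + δ ε)))
      Filter.atTop (nhds 0) := by
    have heq : ∀ nn : ℕ, (2 : ℝ) ^ ((nn : ℝ) * (R - Ixy q w + γ + δ ε))
        = ((2 : ℝ) ^ (R - Ixy q w + γ + δ ε)) ^ nn := by
      intro nn
      rw [mul_comm, Real.rpow_mul (by norm_num), Real.rpow_natCast]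
    simp only [heq]
    exact tendsto_pow_atTop_nhds_zero_of_lt_one hr0 hr1
  have hlim : Filter.Tendsto (fun nn : ℕ =>
      PE1cond nn (K nn) (pS nn) (qs nn) w (T nn ε) (⟨0, hK nn⟩ : Fin (K nn))
        + PA nn (K nn) q (pS nn) (qs nn) w γ
        + (2 : ℝ) ^ ((nn : ℝ) * (R - Ixy q w + γ + δ ε)))
      Filter.atTop (nhds 0) := by
    have := ((h1 ε hεpos).add h2).add hgeo
    simpa using this
  refine squeeze_zero (fun nn => Pr_nonneg (hμ0 nn) _) (fun nn => hpart1 nn ε hεpos) hlim
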